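/- For all positive integers n and m with 2m ≤ n, the number of permutations σ ∈ S_n having at least two cycles of length m is at most n!/(2m²). Consequently, the probability that a uniformly random permutation in S_n has at least two cycles of length m is at most 1/m². -/

import Mathlib

open Filter

noncomputable section

namespace HLC

/-- The parts of a partition in weakly decreasing order, as a list. -/
def sortedParts {n : ℕ} (ν : n.Partition) : List ℕ :=
  (ν.parts.sort (· ≤ ·)).reverse

/-- The `i`-th part (0-indexed) of a partition; `0` if out of range.
In particular `partI ν 0` is the length of the first row. -/
def partI {n : ℕ} (ν : n.Partition) (i : ℕ) : ℕ := (sortedParts ν).getD i 0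

/-- The number of parts, i.e. the length of the first column. -/
def numParts {n : ℕ} (ν : n.Partition) : ℕ := Multiset.card ν.parts

/-- The cells of the Young diagram of a partition (row, column), 0-indexed. -/
def cellsOf {n : ℕ} (ν : n.Partition) : Finset (ℕ × ℕ) :=
  (Finset.range n ×ˢ Finset.range n).filter fun c => c.2 < partI ν c.1

/-- A standard Young tableau on a (possibly skew) cell set `D` with `N` cells:
a filling by `1,…,N`, bijective onto `{1,…,N}`, strictly increasing along rows and
columns, and `0` outside `D`. -/
def IsSkewSYT (D : Finset (ℕ × ℕ)) (N : ℕ) (T : ℕ × ℕ → ℕ) : Prop :=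
  Set.BijOn T ↑D (Set.Icc 1 N) ∧ (∀ c ∉ D, T c = 0) ∧
  (∀ i j₁ j₂, j₁ < j₂ → (i, j₁) ∈ D → (i, j₂) ∈ D → T (i, j₁) < T (i, j₂)) ∧
  (∀ i₁ i₂ j, i₁ < i₂ → (i₁, j) ∈ D → (i₂, j) ∈ D → T (i₁, j) < T (i₂, j))

/-- A standard Young tableau of shape `ν ⊢ n`. -/
def IsSYT {n : ℕ} (ν : n.Partition) (T : ℕ × ℕ → ℕ) : Prop := IsSkewSYT (cellsOf ν) n T

/-- `f^ν` : the number of standard Young tableaux of shape `ν`. -/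
def fSYT {n : ℕ} (ν : n.Partition) : ℕ := Set.ncard {T | IsSYT ν T}

/-- `f^{λ/μ}` : the number of standard Young tableaux of skew shape `λ/μ`
(zero if `μ ⊄ λ`). -/
def fSkew {n m : ℕ} (lam : n.Partition) (μ : m.Partition) : ℕ :=
  if cellsOf μ ⊆ cellsOf lam then
    Set.ncard {T | IsSkewSYT (cellsOf lam \ cellsOf μ) (n - m) T}
  else 0

/-- `i ∈ Des(T)` : the entry `i+1` lies in a strictly lower row than `i`. -/
def IsDescentAt {n : ℕ} (ν : n.Partition) (T : ℕ × ℕ → ℕ) (i : ℕ) : Prop :=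
  ∃ c ∈ cellsOf ν, ∃ c' ∈ cellsOf ν, T c = i ∧ T c' = i + 1 ∧ c.1 < c'.1

open Classical in
/-- The major index of a standard Young tableau. -/
def majT {n : ℕ} (ν : n.Partition) (T : ℕ × ℕ → ℕ) : ℕ :=
  ∑ i ∈ Finset.Ioo 0 n, if IsDescentAt ν T i then i else 0

/-- The number of standard Young tableaux of shape `ν` with `maj ≡ 1 (mod n)`. -/
def countMajOne (n : ℕ) (ν : n.Partition) : ℕ :=
  Set.ncard {T | IsSYT ν T ∧ majT ν T % n = 1}

/-- The Vandermonde determinant `a_δ = ∏_{i<j} (x_i - x_j)`. -/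
def vand (n : ℕ) : MvPolynomial (Fin n) ℤ :=
  ∏ p ∈ Finset.univ.filter (fun p : Fin n × Fin n => p.1 < p.2),
    (MvPolynomial.X p.1 - MvPolynomial.X p.2)

/-- The power sum `p_k` in `n` variables. -/
def psum (n k : ℕ) : MvPolynomial (Fin n) ℤ := ∑ i : Fin n, MvPolynomial.X i ^ k

/-- `p_μ` where `μ` is the full cycle type of `σ` (including fixed points). -/
def cyclePoly {n : ℕ} (σ : Equiv.Perm (Fin n)) : MvPolynomial (Fin n) ℤ :=
  (σ.cycleType.map fun k => psum n k).prod * psum n 1 ^ (n - σ.cycleType.sum)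

/-- The value `χ^ν(σ)` of the irreducible character of `S_n` indexed by `ν ⊢ n`,
via the Frobenius character formula: the coefficient of `x^{ν+δ}` in `a_δ · p_{μ(σ)}`. -/
def chiChar {n : ℕ} (ν : n.Partition) (σ : Equiv.Perm (Fin n)) : ℤ :=
  MvPolynomial.coeff
    (Finsupp.equivFunOnFinite.symm fun i : Fin n => partI ν i + (n - 1 - (i : ℕ)))
    (vand n * cyclePoly σ)

/-- The orbit of `p` under the cyclic group generated by `g`. -/
def orbitG {n : ℕ} (g : Equiv.Perm (Fin n)) (p : Fin n) : Finset (Fin n) :=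
  (Finset.range (n + 1)).image fun k => (g ^ k) p

lemma mem_orbitG_self {n : ℕ} (g : Equiv.Perm (Fin n)) (p : Fin n) : p ∈ orbitG g p :=
  Finset.mem_image.2 ⟨0, Finset.mem_range.2 (Nat.succ_pos n), by simp⟩

/-- A canonical representative of the `g`-cycle of `p` (the minimal point of the cycle). -/
def repG {n : ℕ} (g : Equiv.Perm (Fin n)) (p : Fin n) : Fin n :=
  (orbitG g p).min' ⟨p, mem_orbitG_self g p⟩

/-- The length of the `g`-cycle of `p`. -/
def lenG {n : ℕ} (g : Equiv.Perm (Fin n)) (p : Fin n) : ℕ := (orbitG g p).card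

open Classical in
/-- For `x` in the centralizer of `g`: the exponent `e` with
`x p = g^e (repG g (x p))`. -/
def expG {n : ℕ} (g x : Equiv.Perm (Fin n)) (p : Fin n) : ℕ :=
  if h : ((Finset.range (n + 1)).filter fun e => (g ^ e) (repG g (x p)) = x p).Nonempty
  then ((Finset.range (n + 1)).filter fun e => (g ^ e) (repG g (x p)) = x p).min' h
  else 0

open Classical in
/-- The value at `x` of the linear character `id_{m_1}[ζ_1^r] ⊗ id_{m_2}[ζ_2^r] ⊗ ⋯` of the
centralizer `Z_λ` of `g` (where `λ` is the cycle type of `g`); here `ζ_i` is the primitive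
character `ζ_i(g^e) = exp(2πi·e/i)` of the cyclic group generated by an `i`-cycle. -/
def xiG {n : ℕ} (r : ℤ) (g x : Equiv.Perm (Fin n)) : ℂ :=
  ∏ p ∈ Finset.univ.filter (fun p : Fin n => repG g p = p),
    Complex.exp (2 * Real.pi * Complex.I * (r : ℂ) * (expG g x p : ℂ) / (lenG g p : ℂ))

open Classical in
/-- The character of `S_n` induced from the linear character
`id_{m_1}[ζ_1^r] ⊗ id_{m_2}[ζ_2^r] ⊗ ⋯` of the centralizer `Z_λ` of `g`. -/
def indCharR {n : ℕ} (r : ℤ) (g : Equiv.Perm (Fin n)) (y : Equiv.Perm (Fin n)) : ℂ :=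
  (((Finset.univ.filter fun x : Equiv.Perm (Fin n) => Commute x g).card : ℂ))⁻¹ *
  ∑ x : Equiv.Perm (Fin n), if Commute (x⁻¹ * y * x) g then xiG r g (x⁻¹ * y * x) else 0

/-- The cycle type of `σ ∈ S_n`, as a partition of `n` (including fixed points). -/
def permPartition {n : ℕ} (σ : Equiv.Perm (Fin n)) : n.Partition :=
  Fintype.card_fin n ▸ σ.partition

open Classical in
/-- The character `ψ_r^λ` of `S_n`, induced from the linear character
`id_{m_1}[ζ_1^r] ⊗ id_{m_2}[ζ_2^r] ⊗ ⋯` of the centralizer of a permutation of cycle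
type `λ` (averaged over all such permutations; they all give the same induced
character). `r = 1` is the higher Lie character `ψ^λ`. -/
def psiHLr {n : ℕ} (r : ℤ) (lam : n.Partition) : Equiv.Perm (Fin n) → ℂ := fun y =>
  (((Finset.univ.filter fun g : Equiv.Perm (Fin n) => permPartition g = lam).card : ℂ))⁻¹ *
  ∑ g ∈ Finset.univ.filter (fun g : Equiv.Perm (Fin n) => permPartition g = lam),
      indCharR r g y

/-- The higher Lie character `ψ^λ` of `S_n`. -/
def psiHL {n : ℕ} (lam : n.Partition) : Equiv.Perm (Fin n) → ℂ := psiHLr 1 lam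

/-- The standard inner product of class functions on `S_n`. -/
def innerChar {n : ℕ} (α β : Equiv.Perm (Fin n) → ℂ) : ℂ :=
  ((n.factorial : ℂ))⁻¹ * ∑ σ : Equiv.Perm (Fin n), α σ * (starRingEnd ℂ) (β σ)

/-- The multiplicity `⟨ψ_r^λ, χ^ν⟩`. -/
def multPsiChiR {n : ℕ} (r : ℤ) (lam ν : n.Partition) : ℂ :=
  innerChar (psiHLr r lam) fun σ => (chiChar ν σ : ℂ)

/-- The multiplicity `⟨ψ^λ, χ^ν⟩` of the irreducible character `χ^ν` in the higher Lie
character `ψ^λ`. -/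
def multPsiChi {n : ℕ} (lam ν : n.Partition) : ℂ := multPsiChiR 1 lam ν

/-- `z_λ = ∏_i i^{m_i}·m_i!`, the order of the centralizer of a permutation of cycle type `λ`. -/
def zPart {n : ℕ} (lam : n.Partition) : ℕ :=
  lam.parts.prod * ∏ i ∈ lam.parts.toFinset, (lam.parts.count i).factorial

/-- A sequence of partitions `ν i ⊢ N i` is balanced if first rows and first columns
are `O(√(N i))`. -/
def BalancedSeq {N : ℕ → ℕ} (ν : ∀ i, (N i).Partition) : Prop :=
  ∃ C : ℝ, 0 < C ∧ ∀ i,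
    (partI (ν i) 0 : ℝ) ≤ C * Real.sqrt (N i) ∧ (numParts (ν i) : ℝ) ≤ C * Real.sqrt (N i)

/-- The one-row partition `(n)`. -/
def onerow (n : ℕ) : n.Partition :=
  if h : n = 0 then ⟨0, by simp, by simp [h]⟩
  else ⟨{n}, by
    intro i hi
    rw [Multiset.mem_singleton] at hi
    subst hi
    exact Nat.pos_of_ne_zero h, by simp⟩

/-- The rectangular partition `(m^k)`. -/
def rect (m k : ℕ) : (m * k).Partition :=
  if h : m = 0 then ⟨0, by simp, by simp [h]⟩
  else ⟨Multiset.replicate k m,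
    by intro i hi; rw [Multiset.eq_of_mem_replicate hi]; exact Nat.pos_of_ne_zero h,
    by rw [Multiset.sum_replicate, smul_eq_mul, Nat.mul_comm]⟩

/-- The hook partition `(n-k, 1^k)` (junk value if `k ≥ n`). -/
def hook (n k : ℕ) : n.Partition :=
  if h : k < n then
    ⟨(n - k) ::ₘ Multiset.replicate k 1,
      by
        intro i hi
        rcases Multiset.mem_cons.1 hi with h1 | h1
        · subst h1; omega
        · rw [Multiset.eq_of_mem_replicate h1]; omega,
      by
        rw [Multiset.sum_cons, Multiset.sum_replicate, smul_eq_mul, mul_one]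
        omega⟩
  else onerow n

/-- The disjoint union of two partitions. -/
def glueP {a b : ℕ} (μ : a.Partition) (τ : b.Partition) : (a + b).Partition :=
  ⟨μ.parts + τ.parts,
    by intro i hi; rcases Multiset.mem_add.1 hi with h1 | h1
       exacts [μ.parts_pos h1, τ.parts_pos h1],
    by rw [Multiset.sum_add, μ.parts_sum, τ.parts_sum]⟩

/-- The probability of an event under the uniform distribution on `S_n`. -/
def probPerm (n : ℕ) (P : Equiv.Perm (Fin n) → Prop) : ℝ :=
  (Set.ncard {σ : Equiv.Perm (Fin n) | P σ} : ℝ) / n.factorial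

/-- The relative error `R` defined by `⟨ψ^{λ(σ)}, χ^ν⟩ = (f^ν/z_{λ(σ)})(1+R)`. -/
def Rterm {n : ℕ} (σ : Equiv.Perm (Fin n)) (ν : n.Partition) : ℂ :=
  multPsiChi (permPartition σ) ν * (zPart (permPartition σ) : ℂ) / (fSYT ν : ℂ) - 1

end HLC

namespace CTAux

open Equiv Equiv.Perm Finset

/-- orbit-structure predicate: the σ-orbit of `a` has size exactly `m`. -/
def GoodPt {n : ℕ} (σ : Equiv.Perm (Fin n)) (m : ℕ) (a : Fin n) : Prop :=
  (σ ^ m) a = a ∧ ∀ i < m, ∀ j < m, (σ ^ i) a = (σ ^ j) a → i = j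

lemma pow_fix {α : Type*} (σ : Equiv.Perm α) {c : α} {m : ℕ} (h : (σ ^ m) c = c) :
    ∀ q, ((σ ^ m) ^ q) c = c := by
  intro q
  induction q with
  | zero => simp
  | succ q ih => rw [pow_succ', Equiv.Perm.mul_apply, ih, h]

lemma pow_mod_apply {α : Type*} (σ : Equiv.Perm α) {c : α} {m : ℕ}
    (h : (σ ^ m) c = c) (t : ℕ) : (σ ^ t) c = (σ ^ (t % m)) c := by
  conv_lhs => rw [← Nat.div_add_mod t m, Nat.add_comm, pow_add, pow_mul,
    Equiv.Perm.mul_apply]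
  rw [pow_fix σ h]


lemma parts_hEq {a b : ℕ} (h : a = b) (P : a.Partition) :
    (h ▸ P : b.Partition).parts = P.parts := by subst h; rfl

lemma goodPt_of_fixed {n : ℕ} {σ : Equiv.Perm (Fin n)} {a : Fin n} (h : σ a = a) :
    GoodPt σ 1 a := by
  refine ⟨by simpa using h, ?_⟩
  intro i hi j hj _
  omega

lemma cycle_pow_eq_one {n : ℕ} {c : Equiv.Perm (Fin n)} (hc : c.IsCycle) {a : Fin n}
    (ha : a ∈ c.support) {d : ℕ} (hd : (c ^ d) a = a) : c ^ d = 1 := by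
  ext x
  by_cases hx : x ∈ c.support
  · have hsc : c.SameCycle a x :=
      hc.sameCycle (Equiv.Perm.mem_support.mp ha) (Equiv.Perm.mem_support.mp hx)
    obtain ⟨z, hz⟩ := hsc
    have : (c ^ d) x = (c ^ d) ((c ^ z) a) := by rw [hz]
    rw [this, ← Equiv.Perm.mul_apply, ← zpow_natCast, ← zpow_add, add_comm, zpow_add,
      Equiv.Perm.mul_apply, zpow_natCast, hd, hz]
    simp
  · have : x ∉ (c ^ d).support := fun hmem => hx (Equiv.Perm.support_pow_le c d hmem)
    simp [Equiv.Perm.notMem_support.mp this]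

lemma goodPt_of_cycleOf {n m : ℕ} (hm : 0 < m) {σ : Equiv.Perm (Fin n)}
    {c : Equiv.Perm (Fin n)} (hcyc : c.IsCycle) (hcc : c ∈ σ.cycleFactorsFinset)
    (hcard : c.support.card = m) {a : Fin n} (ha : a ∈ c.support) : GoodPt σ m a := by
  classical
  have hco : c = σ.cycleOf a := Equiv.Perm.cycle_is_cycleOf ha hcc
  have hord : orderOf c = m := by rw [hcyc.orderOf, hcard]
  have hpow : ∀ t : ℕ, (σ ^ t) a = (c ^ t) a := by
    intro t
    rw [hco, Equiv.Perm.cycleOf_pow_apply_self]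
  have P1 : (σ ^ m) a = a := by
    rw [hpow, ← hord, pow_orderOf_eq_one]; rfl
  refine ⟨P1, ?_⟩
  have key : ∀ i j : ℕ, i ≤ j → j < m → (σ ^ i) a = (σ ^ j) a → i = j := by
    intro i j hij hj h
    have h2 : (σ ^ (j - i)) a = a := by
      have h3 : (σ ^ i) ((σ ^ (j - i)) a) = (σ ^ i) a := by
        rw [← Equiv.Perm.mul_apply, ← pow_add, show i + (j - i) = j by omega, h]
      exact (σ ^ i).injective h3
    by_contra hne
    have hone : c ^ (j - i) = 1 := cycle_pow_eq_one hcyc ha (by rw [← hpow]; exact h2)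
    have hdvd : m ∣ (j - i) := hord ▸ orderOf_dvd_of_pow_eq_one hone
    have := Nat.le_of_dvd (by omega) hdvd
    omega
  intro i hi j hj h
  rcases le_total i j with hle | hle
  · exact key i j hle hj h
  · exact (key j i hle hi h.symm).symm

lemma exists_pair {n m : ℕ} (hm : 0 < m) (σ : Equiv.Perm (Fin n))
    (hσ : 2 ≤ Multiset.count m σ.partition.parts) :
    ∃ a b : Fin n, GoodPt σ m a ∧ GoodPt σ m b ∧ ∀ i j : ℕ, (σ ^ i) a ≠ (σ ^ j) b := by
  classical
  rw [Equiv.Perm.parts_partition, Multiset.count_add] at hσ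
  rcases eq_or_lt_of_le (show 1 ≤ m from hm) with h1 | h2
  · -- m = 1
    have hm1 : m = 1 := h1.symm
    subst hm1
    have hct : Multiset.count 1 σ.cycleType = 0 := by
      rw [Multiset.count_eq_zero]
      intro hmem
      have := Equiv.Perm.two_le_of_mem_cycleType hmem
      omega
    rw [hct, zero_add, Multiset.count_replicate_self] at hσ
    have hcompl : 1 < (σ.supportᶜ).card := by
      rw [Finset.card_compl]
      have := Finset.card_univ (α := Fin n)
      omega
    obtain ⟨a, ha, b, hb, hab⟩ := Finset.one_lt_card.mp hcompl
    have hfa : σ a = a := Equiv.Perm.notMem_support.mp (Finset.mem_compl.mp ha)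
    have hfb : σ b = b := Equiv.Perm.notMem_support.mp (Finset.mem_compl.mp hb)
    refine ⟨a, b, goodPt_of_fixed hfa, goodPt_of_fixed hfb, fun i j h => hab ?_⟩
    rw [Equiv.Perm.pow_apply_eq_self_of_apply_eq_self hfa] at h
    rw [Equiv.Perm.pow_apply_eq_self_of_apply_eq_self hfb] at h
    exact h
  · -- 1 < m
    have hrep : Multiset.count m
        (Multiset.replicate (Fintype.card (Fin n) - σ.support.card) 1) = 0 := by
      rw [Multiset.count_replicate, if_neg (by omega)]
    rw [hrep, add_zero, Equiv.Perm.cycleType_def, Multiset.count_map] at hσ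
    have hσ' : 1 < (σ.cycleFactorsFinset.filter
        (fun c => m = (Finset.card ∘ Equiv.Perm.support) c)).card := by
      have heq : (σ.cycleFactorsFinset.filter
          (fun c => m = (Finset.card ∘ Equiv.Perm.support) c)).card
          = Multiset.card (Multiset.filter (fun a => m = (Finset.card ∘ Equiv.Perm.support) a)
              σ.cycleFactorsFinset.val) := by
        rw [Finset.card_def, Finset.filter_val]
      rw [heq]
      omega
    obtain ⟨c₁, hc₁, c₂, hc₂, hne⟩ := Finset.one_lt_card.mp hσ'
    rw [Finset.mem_filter] at hc₁ hc₂
    have hcyc₁ : c₁.IsCycle := (Equiv.Perm.mem_cycleFactorsFinset_iff.mp hc₁.1).1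
    have hcyc₂ : c₂.IsCycle := (Equiv.Perm.mem_cycleFactorsFinset_iff.mp hc₂.1).1
    have hcard₁ : c₁.support.card = m := hc₁.2.symm
    have hcard₂ : c₂.support.card = m := hc₂.2.symm
    obtain ⟨a, ha⟩ := Finset.card_pos.mp (by rw [hcard₁]; omega : 0 < c₁.support.card)
    obtain ⟨b, hb⟩ := Finset.card_pos.mp (by rw [hcard₂]; omega : 0 < c₂.support.card)
    refine ⟨a, b, goodPt_of_cycleOf hm hcyc₁ hc₁.1 hcard₁ ha,
      goodPt_of_cycleOf hm hcyc₂ hc₂.1 hcard₂ hb, fun i j h => ?_⟩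
    have h1 : σ.SameCycle a ((σ ^ i) a) := ⟨i, by simp⟩
    rw [h] at h1
    have h2 : σ.SameCycle a b := Equiv.Perm.sameCycle_pow_right.mp h1
    apply hne
    rw [Equiv.Perm.cycle_is_cycleOf ha hc₁.1, Equiv.Perm.cycle_is_cycleOf hb hc₂.1,
      h2.cycleOf_eq]

/-- The condition that `σ` cyclically rotates the two blocks of the embedding `h`. -/
abbrev Cnd {n m : ℕ} [NeZero m] (σ : Equiv.Perm (Fin n)) (h : Fin 2 × Fin m ↪ Fin n) : Prop :=
  ∀ p : Fin 2 × Fin m, σ (h p) = h (p.1, p.2 + 1)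

/-- For each embedding `h`, the number of `σ` satisfying `Cnd σ h` is `(n - 2m)!`. -/
lemma fiber_card {n m : ℕ} [NeZero m] (h : Fin 2 × Fin m ↪ Fin n) :
    (Finset.univ.filter fun σ : Equiv.Perm (Fin n) => Cnd σ h).card
      = (n - 2 * m).factorial := by
  classical
  set q : Equiv.Perm (Fin 2 × Fin m) :=
    Equiv.prodCongr (Equiv.refl (Fin 2)) (Equiv.addRight 1) with hq
  set σ₀ : Equiv.Perm (Fin n) := q.viaEmbedding h with hσ₀
  have hσ₀h : ∀ p : Fin 2 × Fin m, σ₀ (h p) = h (p.1, p.2 + 1) := by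
    intro p
    rw [hσ₀, Equiv.Perm.viaEmbedding_apply]
    rfl
  have e1 : {σ : Equiv.Perm (Fin n) // Cnd σ h}
      ≃ {π : Equiv.Perm (Fin n) // ∀ a, ¬ a ∉ Set.range h → π a = a} :=
  { toFun := fun σ => ⟨σ₀⁻¹ * σ.1, by
      intro x hx
      obtain ⟨p, rfl⟩ := not_not.mp hx
      rw [Equiv.Perm.mul_apply, σ.2 p, ← hσ₀h p]
      
      simp⟩
    invFun := fun π => ⟨σ₀ * π.1, by
      intro p
      rw [Equiv.Perm.mul_apply, π.2 (h p) (by simp [Set.mem_range]), hσ₀h p]⟩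
    left_inv := fun σ => by simp
    right_inv := fun π => by simp }
  have e2 : {π : Equiv.Perm (Fin n) // ∀ a, ¬ a ∉ Set.range h → π a = a}
      ≃ Equiv.Perm {a : Fin n // a ∉ Set.range h} :=
    (Equiv.Perm.subtypeEquivSubtypePerm (fun a => a ∉ Set.range h)).symm
  have hcard : Fintype.card {a : Fin n // a ∉ Set.range h} = n - 2 * m := by
    rw [Fintype.card_subtype_compl]
    have : Fintype.card {a : Fin n // a ∈ Set.range h} = 2 * m := by
      have e : {a : Fin n // a ∈ Set.range h} ≃ (Fin 2 × Fin m) :=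
        (Equiv.ofInjective h h.injective).symm
      rw [Fintype.card_congr e]
      simp [two_mul]
    rw [this]
    simp
  calc (Finset.univ.filter fun σ : Equiv.Perm (Fin n) => Cnd σ h).card
      = Fintype.card {σ : Equiv.Perm (Fin n) // Cnd σ h} := (Fintype.card_subtype _).symm
    _ = Fintype.card (Equiv.Perm {a : Fin n // a ∉ Set.range h}) :=
        Fintype.card_congr (e1.trans e2)
    _ = (n - 2 * m).factorial := by rw [Fintype.card_perm, hcard]

lemma fin2_cases : ∀ j j' s : Fin 2, j ≠ j' → j ≠ s → j' = s := by decide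

lemma lower_bound {n m : ℕ} [NeZero m] (σ : Equiv.Perm (Fin n)) {a b : Fin n}
    (ha : GoodPt σ m a) (hb : GoodPt σ m b) (hab : ∀ i j : ℕ, (σ ^ i) a ≠ (σ ^ j) b) :
    2 * m * m ≤ (Finset.univ.filter fun h : Fin 2 × Fin m ↪ Fin n => Cnd σ h).card := by
  classical
  have hm : 0 < m := Nat.pos_of_ne_zero (NeZero.ne m)
  set g : Fin 2 → Fin 2 → Fin n := fun s j => if j = s then a else b with hg
  have hgood : ∀ s j, GoodPt σ m (g s j) := by
    intro s j
    by_cases hj : j = s <;> simp only [hg, hj, if_pos, if_neg, ite_true, ite_false] <;>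
      first | exact ha | (rw [if_neg hj]; exact hb) | exact hb
  have hgdist : ∀ s j j', j ≠ j' → ∀ i i' : ℕ, (σ ^ i) (g s j) ≠ (σ ^ i') (g s j') := by
    intro s j j' hjj i i'
    by_cases hj : j = s
    · have hj' : j' ≠ s := fun hc => hjj (hj.trans hc.symm)
      simp only [hg, if_pos hj, if_neg hj']
      exact hab i i'
    · have hj' : j' = s := fin2_cases j j' s hjj hj
      simp only [hg, if_neg hj, if_pos hj']
      exact fun hx => (hab i' i hx.symm)
  -- the family of embeddings
  set sh : Fin 2 → Fin 2 → Fin m → Fin m → ℕ :=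
    fun s j k l => if j = s then (k : ℕ) else (l : ℕ) with hsh
  have hshlt : ∀ s j k l, sh s j k l < m := by
    intro s j k l
    by_cases hj : j = s <;> simp [hsh, hj, Fin.is_lt]
  have keyinj : ∀ (s : Fin 2) (k l : Fin m), Function.Injective
      (fun p : Fin 2 × Fin m => (σ ^ ((p.2 : ℕ) + sh s p.1 k l)) (g s p.1)) := by
    intro s k l p q hpq
    simp only at hpq
    by_cases hjj : p.1 = q.1
    · rw [hjj] at hpq
      have P1 := (hgood s q.1).1
      have P2 := (hgood s q.1).2
      rw [pow_mod_apply σ P1, pow_mod_apply σ P1 ((q.2 : ℕ) + sh s q.1 k l)] at hpq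
      have hmod := P2 _ (Nat.mod_lt _ hm) _ (Nat.mod_lt _ hm) hpq
      have hc : (p.2 : ℕ) % m = (q.2 : ℕ) % m := Nat.ModEq.add_right_cancel' _ hmod
      rw [Nat.mod_eq_of_lt p.2.is_lt, Nat.mod_eq_of_lt q.2.is_lt] at hc
      exact Prod.ext hjj (Fin.ext hc)
    · exact absurd hpq (hgdist s p.1 q.1 hjj _ _)
  set F : Fin 2 × Fin m × Fin m → (Fin 2 × Fin m ↪ Fin n) :=
    fun t => ⟨fun p => (σ ^ ((p.2 : ℕ) + sh t.1 p.1 t.2.1 t.2.2)) (g t.1 p.1),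
      keyinj t.1 t.2.1 t.2.2⟩ with hF
  have hcnd : ∀ t, Cnd σ (F t) := by
    rintro ⟨s, k, l⟩ ⟨j, i⟩
    simp only [hF, Function.Embedding.coeFn_mk]
    have P1 := (hgood s j).1
    rw [← Equiv.Perm.mul_apply, ← pow_succ']
    have hv : ((i + 1 : Fin m) : ℕ) = ((i : ℕ) + 1) % m := by
      obtain ⟨m', rfl⟩ : ∃ m', m = m' + 1 := ⟨m - 1, by omega⟩
      rw [Fin.add_def, Fin.val_one']
      exact Nat.ModEq.add_left _ (Nat.mod_modEq 1 _)
    have h1 : (((i : ℕ) + 1) % m + sh s j k l) % m = (((i : ℕ) + 1) + sh s j k l) % m :=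
      Nat.ModEq.add_right _ (Nat.mod_modEq _ m)
    have hexp : ((i : ℕ) + sh s j k l + 1) % m
        = (((i + 1 : Fin m) : ℕ) + sh s j k l) % m := by
      rw [hv, h1, show (i : ℕ) + sh s j k l + 1 = ((i : ℕ) + 1) + sh s j k l from by omega]
    rw [pow_mod_apply σ P1, pow_mod_apply σ P1 (((i + 1 : Fin m) : ℕ) + sh s j k l), hexp]
  have hFinj : Function.Injective F := by
    rintro ⟨s, k, l⟩ ⟨s', k', l'⟩ hEq
    have hfun : ∀ p, (F (s, k, l)) p = (F (s', k', l')) p := fun p => by rw [hEq]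
    have hne' : ∀ t : Fin 2, t + 1 ≠ t := by decide
    by_cases hss : s = s'
    · subst hss
      have h0 := hfun (s, 0)
      have h1 := hfun (s + 1, 0)
      have hne : (s + 1 : Fin 2) ≠ s := hne' s
      simp only [hF, Function.Embedding.coeFn_mk, Fin.val_zero, zero_add, hsh, hg,
        if_pos rfl, if_neg hne] at h0 h1
      have hk : k = k' := Fin.ext (ha.2 _ k.is_lt _ k'.is_lt h0)
      have hl : l = l' := Fin.ext (hb.2 _ l.is_lt _ l'.is_lt h1)
      rw [hk, hl]
    · exfalso
      have h0 := hfun (s, 0)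
      simp only [hF, Function.Embedding.coeFn_mk, Fin.val_zero, zero_add, hsh, hg,
        if_pos rfl, if_neg hss] at h0
      exact hab _ _ h0
  have hsub : Finset.univ.image F ⊆
      Finset.univ.filter fun h : Fin 2 × Fin m ↪ Fin n => Cnd σ h := by
    intro x hx
    obtain ⟨t, _, rfl⟩ := Finset.mem_image.mp hx
    exact Finset.mem_filter.mpr ⟨Finset.mem_univ _, hcnd t⟩
  calc 2 * m * m = (Finset.univ : Finset (Fin 2 × Fin m × Fin m)).card := by
        simp [mul_assoc]
    _ = (Finset.univ.image F).card := (Finset.card_image_of_injective _ hFinj).symm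
    _ ≤ _ := Finset.card_le_card hsub

lemma main_count {n m : ℕ} [NeZero m] (h2m : 2 * m ≤ n) :
    2 * m * m * (Finset.univ.filter fun σ : Equiv.Perm (Fin n) =>
        2 ≤ Multiset.count m σ.partition.parts).card ≤ n.factorial := by
  classical
  have hm : 0 < m := Nat.pos_of_ne_zero (NeZero.ne m)
  set E : Finset (Equiv.Perm (Fin n) × (Fin 2 × Fin m ↪ Fin n)) :=
    Finset.univ.filter (fun q => Cnd q.1 q.2) with hE
  have hsnd : E.card = ∑ h : Fin 2 × Fin m ↪ Fin n,
      (Finset.univ.filter fun σ : Equiv.Perm (Fin n) => Cnd σ h).card := by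
    rw [Finset.card_eq_sum_card_fiberwise (f := fun q => q.2) (t := Finset.univ)
      (fun q _ => Finset.mem_univ _)]
    refine Finset.sum_congr rfl fun h _ => ?_
    refine Finset.card_bij (fun q _ => q.1) ?_ ?_ ?_
    · intro q hq
      rw [Finset.mem_filter] at hq
      obtain ⟨hq1, hq2⟩ := hq
      rw [hE, Finset.mem_filter] at hq1
      exact Finset.mem_filter.mpr ⟨Finset.mem_univ _, hq2 ▸ hq1.2⟩
    · intro q1 hq1 q2 hq2 heq
      rw [Finset.mem_filter] at hq1 hq2
      exact Prod.ext heq (hq1.2.trans hq2.2.symm)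
    · intro σ hσ
      rw [Finset.mem_filter] at hσ
      exact ⟨(σ, h), Finset.mem_filter.mpr
        ⟨Finset.mem_filter.mpr ⟨Finset.mem_univ _, hσ.2⟩, rfl⟩, rfl⟩
  have hfst : E.card = ∑ σ : Equiv.Perm (Fin n),
      (Finset.univ.filter fun h : Fin 2 × Fin m ↪ Fin n => Cnd σ h).card := by
    rw [Finset.card_eq_sum_card_fiberwise (f := fun q => q.1) (t := Finset.univ)
      (fun q _ => Finset.mem_univ _)]
    refine Finset.sum_congr rfl fun σ _ => ?_
    refine Finset.card_bij (fun q _ => q.2) ?_ ?_ ?_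
    · intro q hq
      rw [Finset.mem_filter] at hq
      obtain ⟨hq1, hq2⟩ := hq
      rw [hE, Finset.mem_filter] at hq1
      exact Finset.mem_filter.mpr ⟨Finset.mem_univ _, hq2 ▸ hq1.2⟩
    · intro q1 hq1 q2 hq2 heq
      rw [Finset.mem_filter] at hq1 hq2
      exact Prod.ext (hq1.2.trans hq2.2.symm) heq
    · intro h hh
      rw [Finset.mem_filter] at hh
      exact ⟨(σ, h), Finset.mem_filter.mpr
        ⟨Finset.mem_filter.mpr ⟨Finset.mem_univ _, hh.2⟩, rfl⟩, rfl⟩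
  have hEcard : E.card = n.factorial := by
    rw [hsnd, Finset.sum_congr rfl (fun h _ => fiber_card h), Finset.sum_const, smul_eq_mul,
      Finset.card_univ, Fintype.card_embedding_eq, Fintype.card_prod, Fintype.card_fin,
      Fintype.card_fin, Fintype.card_fin, Nat.descFactorial_eq_factorial_mul_choose,
      mul_comm ((2 * m).factorial) (n.choose (2 * m)),
      Nat.choose_mul_factorial_mul_factorial h2m]
  have hlow : 2 * m * m * (Finset.univ.filter fun σ : Equiv.Perm (Fin n) =>
      2 ≤ Multiset.count m σ.partition.parts).card ≤ E.card := by
    rw [hfst]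
    calc 2 * m * m * (Finset.univ.filter fun σ : Equiv.Perm (Fin n) =>
          2 ≤ Multiset.count m σ.partition.parts).card
        = ∑ _σ ∈ (Finset.univ.filter fun σ : Equiv.Perm (Fin n) =>
            2 ≤ Multiset.count m σ.partition.parts), 2 * m * m := by
          rw [Finset.sum_const, smul_eq_mul, mul_comm]
      _ ≤ ∑ σ ∈ (Finset.univ.filter fun σ : Equiv.Perm (Fin n) =>
            2 ≤ Multiset.count m σ.partition.parts),
            (Finset.univ.filter fun h : Fin 2 × Fin m ↪ Fin n => Cnd σ h).card := by
          refine Finset.sum_le_sum fun σ hσ => ?_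
          obtain ⟨a, b, hga, hgb, hdist⟩ :=
            exists_pair hm σ (Finset.mem_filter.mp hσ).2
          exact lower_bound σ hga hgb hdist
      _ ≤ ∑ σ : Equiv.Perm (Fin n),
            (Finset.univ.filter fun h : Fin 2 × Fin m ↪ Fin n => Cnd σ h).card :=
          Finset.sum_le_sum_of_subset (Finset.subset_univ _)
  omega

end CTAux


open HLC in
/-- For positive integers `n, m` with `2m ≤ n`, the number of permutations in `S_n` having
at least two cycles of length `m` is at most `n!/(2m²)`; consequently the probability that
a uniformly random permutation in `S_n` has at least two cycles of length `m` is at most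
`1/m²`. (The number of cycles of `σ` of length `m` is the multiplicity of `m` in the
cycle-type partition `λ(σ)`.) -/
theorem count_two_cycles_of_length_le (n m : ℕ) (hn : 0 < n) (hm : 0 < m)
    (h2m : 2 * m ≤ n) :
    (Set.ncard {σ : Equiv.Perm (Fin n) |
        2 ≤ Multiset.count m (permPartition σ).parts} : ℝ)
      ≤ (n.factorial : ℝ) / (2 * m ^ 2) ∧
    probPerm n (fun σ => 2 ≤ Multiset.count m (permPartition σ).parts) ≤ 1 / m ^ 2 := by
  classical
  haveI : NeZero m := ⟨hm.ne'⟩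
  have hparts : ∀ σ : Equiv.Perm (Fin n), (permPartition σ).parts = σ.partition.parts :=
    fun σ => CTAux.parts_hEq (Fintype.card_fin n) σ.partition
  set S : Finset (Equiv.Perm (Fin n)) :=
    Finset.univ.filter (fun σ => 2 ≤ Multiset.count m σ.partition.parts) with hS
  have hset : {σ : Equiv.Perm (Fin n) | 2 ≤ Multiset.count m (permPartition σ).parts}
      = ↑S := by
    ext σ
    simp [hS, hparts σ]
  have hcount := CTAux.main_count (n := n) (m := m) h2m
  have hm2 : (0 : ℝ) < 2 * (m : ℝ) ^ 2 := by positivity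
  have hfac : (0 : ℝ) < (n.factorial : ℝ) := by exact_mod_cast n.factorial_pos
  have part1 : (Set.ncard {σ : Equiv.Perm (Fin n) |
      2 ≤ Multiset.count m (permPartition σ).parts} : ℝ)
      ≤ (n.factorial : ℝ) / (2 * m ^ 2) := by
    rw [hset, Set.ncard_coe_finset, le_div_iff₀ hm2]
    have hc : ((2 * m * m * S.card : ℕ) : ℝ) ≤ ((n.factorial : ℕ) : ℝ) := by
      exact_mod_cast hcount
    push_cast at hc ⊢
    nlinarith [hc]
  refine ⟨part1, ?_⟩
  have hprob : probPerm n (fun σ => 2 ≤ Multiset.count m (permPartition σ).parts)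
      = (Set.ncard {σ : Equiv.Perm (Fin n) |
          2 ≤ Multiset.count m (permPartition σ).parts} : ℝ) / n.factorial := rfl
  rw [hprob]
  have hmpos : (0 : ℝ) < (m : ℝ) ^ 2 := by positivity
  calc (Set.ncard {σ : Equiv.Perm (Fin n) |
          2 ≤ Multiset.count m (permPartition σ).parts} : ℝ) / n.factorial
      ≤ ((n.factorial : ℝ) / (2 * m ^ 2)) / n.factorial := by
        gcongr
    _ = 1 / (2 * m ^ 2) := by field_simp
    _ ≤ 1 / m ^ 2 := by
        apply one_div_le_one_div_of_le hmpos
        nlinarith [hmpos]
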